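/- Let f(ζ) = ζ⁴ + (1997/600)ζ³ + (121/120)ζ² + (401/5000)ζ + 1/2000 - (5/8)e^{-10ζ}ζ² - (1/16)e^{-10ζ}ζ for real ζ ≥ 0. Then f(0) = 1/2000 > 0 and f(ζ) > 0 for all ζ ≥ 0; in particular f has no nonnegative real root. -/
import Mathlib

theorem f_no_nonneg_root :
    let f : ℝ → ℝ := fun z => z ^ 4 + (1997 / 600) * z ^ 3 + (121 / 120) * z ^ 2 +
      (401 / 5000) * z + 1 / 2000 - (5 / 8) * Real.exp (-10 * z) * z ^ 2 -
      (1 / 16) * Real.exp (-10 * z) * z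
    f 0 = 1 / 2000 ∧ (0:ℝ) < 1 / 2000 ∧ (∀ z : ℝ, 0 ≤ z → 0 < f z) ∧
    ¬ ∃ z : ℝ, 0 ≤ z ∧ f z = 0 := by
  intro f
  have hpos : ∀ z : ℝ, 0 ≤ z → 0 < f z := by
    intro z hz
    have he : Real.exp (-10 * z) ≤ 1 := Real.exp_le_one_iff.mpr (by linarith)
    have hsq : (0:ℝ) ≤ z ^ 2 := sq_nonneg z
    simp only [f]
    nlinarith [pow_nonneg hz 4, pow_nonneg hz 3, mul_nonneg hsq hz]
  refine ⟨by simp [f], by norm_num, hpos, ?_⟩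
  rintro ⟨z, hz, hfz⟩
  exact absurd hfz (ne_of_gt (hpos z hz))
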